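/- The centred triangular maximal operator 𝒯 is bounded on L^1(𝔗) with operator norm at most 2, i.e. ‖𝒯f‖_1 ≤ 2‖f‖_1 for all f ∈ L^1(𝔗). -/

import Mathlib

open scoped ENNReal NNReal
open Set

/-- A locally finite tree presented via the data induced by a fixed geodesic ray `ω`:
a predecessor map `pred`, a height (Busemann) function `ht` increasing by one along `pred`,
finite successor sets, and connectedness (any two vertices have a common ancestor). -/
structure TreeData (V : Type*) where
  pred : V → V
  ht : V → ℤ
  ht_pred : ∀ x, ht (pred x) = ht x + 1
  fiber_finite : ∀ x, {y | pred y = x}.Finite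
  connected : ∀ x y, ∃ k l : ℕ, pred^[k] x = pred^[l] y

namespace TreeData

variable {V : Type*}

/-- The set of successors of a vertex. -/
def succs (t : TreeData V) (x : V) : Set V := {y | t.pred y = x}

/-- Every vertex has at least 3 neighbours, i.e. at least 2 successors. -/
def Thick (t : TreeData V) : Prop := ∀ x, 2 ≤ (t.succs x).ncard

/-- Homogeneous tree `𝔗_b`: every vertex has exactly `b+1` neighbours, i.e. `b` successors. -/
def Homog (t : TreeData V) (b : ℕ) : Prop := ∀ x, (t.succs x).ncard = b

/-- The triangle with vertex `x` and height `R`: all descendants of `x` within `R` generations. -/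
def tri (t : TreeData V) (x : V) (R : ℕ) : Set V := {y | ∃ j ≤ R, t.pred^[j] y = x}

/-- The base of the triangle with vertex `x` and height `R`: the `R`-fold successors of `x`. -/
def base (t : TreeData V) (x : V) (R : ℕ) : Set V := {y | t.pred^[R] y = x}

/-- The graph distance on the tree. -/
noncomputable def dist (t : TreeData V) (x y : V) : ℕ :=
  sInf {n | ∃ k l : ℕ, k + l = n ∧ t.pred^[k] x = t.pred^[l] y}

/-- Number of points of a set, as an element of `ℝ≥0∞` (counting measure). -/
noncomputable def esize (E : Set V) : ℝ≥0∞ := ∑' _ : E, (1 : ℝ≥0∞)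

/-- The average of `|f|` over a set, with respect to counting measure. -/
noncomputable def setAvg (t : TreeData V) (S : Set V) (f : V → ℝ) : ℝ≥0∞ :=
  (∑' y : S, (‖f y‖₊ : ℝ≥0∞)) / (S.ncard : ℝ≥0∞)

/-- The centred triangular maximal operator `𝒯`. -/
noncomputable def cmax (t : TreeData V) (f : V → ℝ) (x : V) : ℝ≥0∞ :=
  ⨆ R : ℕ, t.setAvg (t.tri x R) f

/-- The uncentred triangular maximal operator `𝒰`. -/
noncomputable def umax (t : TreeData V) (f : V → ℝ) (x : V) : ℝ≥0∞ :=
  ⨆ (v : V) (R : ℕ) (_ : x ∈ t.tri v R), t.setAvg (t.tri v R) f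

/-- The uncentred base maximal operator `ℬᵘ`. -/
noncomputable def ubmax (t : TreeData V) (f : V → ℝ) (x : V) : ℝ≥0∞ :=
  ⨆ (v : V) (R : ℕ) (_ : x ∈ t.tri v R), t.setAvg (t.base v R) f

/-- The modified triangle `T'_r(x) = T_r(x) ∪ {p^r(x)}`. -/
def mtri (t : TreeData V) (x : V) (r : ℕ) : Set V := t.tri x r ∪ {t.pred^[r] x}

/-- The modified centred triangular maximal operator `𝒯'`. -/
noncomputable def cmax' (t : TreeData V) (f : V → ℝ) (x : V) : ℝ≥0∞ :=
  ⨆ r : ℕ, t.setAvg (t.mtri x r) f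

/-- The modified uncentred triangular maximal operator `𝒰'`. -/
noncomputable def umax' (t : TreeData V) (f : V → ℝ) (x : V) : ℝ≥0∞ :=
  ⨆ (v : V) (r : ℕ) (_ : x ∈ t.mtri v r), t.setAvg (t.mtri v r) f

/-- The `ℓ^p` norm with respect to counting measure, for `p ∈ [1,∞]`. -/
noncomputable def eLp (p : ℝ≥0∞) (g : V → ℝ≥0∞) : ℝ≥0∞ :=
  if p = ∞ then ⨆ v, g v else (∑' v, g v ^ p.toReal) ^ (1 / p.toReal)

/-- `|f|` as an `ℝ≥0∞`-valued function. -/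
noncomputable def nn (f : V → ℝ) (x : V) : ℝ≥0∞ := (‖f x‖₊ : ℝ≥0∞)

/-- The point mass at `o`. -/
noncomputable def delta (o : V) : V → ℝ := ({o} : Set V).indicator fun _ => 1

end TreeData


namespace TreeData
variable {V : Type*} (t : TreeData V)

lemma ht_iterate (y : V) : ∀ j : ℕ, t.ht (t.pred^[j] y) = t.ht y + j := by
  intro j
  induction j with
  | zero => simp
  | succ n ih => rw [Function.iterate_succ_apply', t.ht_pred, ih]; push_cast; ring

lemma iterate_inj (y : V) {j j' : ℕ} (h : t.pred^[j] y = t.pred^[j'] y) : j = j' := by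
  have := congrArg t.ht h
  rw [t.ht_iterate, t.ht_iterate] at this
  exact_mod_cast (add_right_injective _ this)

lemma base_zero (x : V) : t.base x 0 = {x} := by
  ext y; simp [base]

lemma base_succ (x : V) (R : ℕ) : t.base x (R + 1) = t.pred ⁻¹' (t.base x R) := by
  ext y; simp [base, Function.iterate_succ_apply]

lemma preimage_eq_biUnion (S : Set V) : t.pred ⁻¹' S = ⋃ w ∈ S, t.succs w := by
  ext y; simp [succs, eq_comm]

lemma preimage_finite {S : Set V} (hS : S.Finite) : (t.pred ⁻¹' S).Finite := by
  rw [t.preimage_eq_biUnion]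
  exact hS.biUnion fun w _ => t.fiber_finite w

lemma base_finite (x : V) (R : ℕ) : (t.base x R).Finite := by
  induction R with
  | zero => rw [t.base_zero]; exact finite_singleton x
  | succ n ih => rw [t.base_succ]; exact t.preimage_finite ih

lemma tri_eq_biUnion (x : V) (R : ℕ) : t.tri x R = ⋃ j ∈ Finset.range (R + 1), t.base x j := by
  ext y; simp [tri, base, Nat.lt_succ_iff]

lemma tri_finite (x : V) (R : ℕ) : (t.tri x R).Finite := by
  rw [t.tri_eq_biUnion]
  exact Set.Finite.biUnion (Finset.range (R+1)).finite_toSet fun j _ => t.base_finite x j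

lemma base_subset_tri (x : V) (R : ℕ) : t.base x R ⊆ t.tri x R :=
  fun y hy => ⟨R, le_refl R, hy⟩

lemma tri_mono (x : V) {R R' : ℕ} (h : R ≤ R') : t.tri x R ⊆ t.tri x R' :=
  fun y ⟨j, hj, hjy⟩ => ⟨j, hj.trans h, hjy⟩

lemma card_preimage (hthick : t.Thick) {S : Set V} (hS : S.Finite) :
    2 * S.ncard ≤ (t.pred ⁻¹' S).ncard := by
  classical
  have hfin := t.preimage_finite hS
  rw [Set.ncard_eq_toFinset_card _ hS, Set.ncard_eq_toFinset_card _ hfin]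
  have hb : hfin.toFinset = hS.toFinset.biUnion (fun w => (t.fiber_finite w).toFinset) := by
    ext y
    simp [succs, eq_comm]
  rw [hb, Finset.card_biUnion]
  · calc 2 * hS.toFinset.card = ∑ _w ∈ hS.toFinset, 2 := by
          rw [Finset.sum_const, smul_eq_mul, mul_comm]
      _ ≤ _ := by
          apply Finset.sum_le_sum
          intro w _
          rw [← Set.ncard_eq_toFinset_card _ (t.fiber_finite w)]
          exact hthick w
  · intro a _ b _ hab
    simp only [Finset.disjoint_left, Set.Finite.mem_toFinset, Set.mem_setOf_eq]
    intro y h1 h2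
    exact hab (h1 ▸ h2 ▸ rfl)

lemma card_base (hthick : t.Thick) (x : V) (R : ℕ) : 2 ^ R ≤ (t.base x R).ncard := by
  induction R with
  | zero => simp [t.base_zero]
  | succ n ih =>
      rw [t.base_succ, pow_succ, mul_comm]
      calc 2 * 2 ^ n ≤ 2 * (t.base x n).ncard := by omega
        _ ≤ _ := t.card_preimage hthick (t.base_finite x n)

lemma card_tri (hthick : t.Thick) (x : V) (R : ℕ) : 2 ^ R ≤ (t.tri x R).ncard :=
  (t.card_base hthick x R).trans
    (Set.ncard_le_ncard (t.base_subset_tri x R) (t.tri_finite x R))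


/-- The kernel: `sup_R 1_{T_R(x)}(y) / |T_R(x)|`. -/
noncomputable def ker (t : TreeData V) (y x : V) : ℝ≥0∞ :=
  ⨆ R : ℕ, (t.tri x R).indicator (fun _ => ((t.tri x R).ncard : ℝ≥0∞)⁻¹) y

lemma ker_eq_zero (y x : V) (h : ∀ j : ℕ, t.pred^[j] y ≠ x) : t.ker y x = 0 := by
  rw [ker, ENNReal.iSup_eq_zero]
  intro R
  apply Set.indicator_of_notMem
  rintro ⟨j, _, hj⟩
  exact h j hj

lemma ker_le (hthick : t.Thick) (y : V) (j : ℕ) :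
    t.ker y (t.pred^[j] y) ≤ (2 : ℝ≥0∞)⁻¹ ^ j := by
  apply iSup_le
  intro R
  by_cases hy : y ∈ t.tri (t.pred^[j] y) R
  · rw [Set.indicator_of_mem hy]
    obtain ⟨j', hj'R, hj'⟩ := hy
    have hjj : j = j' := t.iterate_inj y hj'.symm
    subst hjj
    have hcard : 2 ^ j ≤ (t.tri (t.pred^[j] y) R).ncard :=
      (t.card_tri hthick _ j).trans
        (Set.ncard_le_ncard (t.tri_mono _ hj'R) (t.tri_finite _ R))
    rw [← ENNReal.inv_pow]
    apply ENNReal.inv_le_inv.mpr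
    calc (2 : ℝ≥0∞) ^ j = ((2 ^ j : ℕ) : ℝ≥0∞) := by push_cast; ring
      _ ≤ _ := Nat.cast_le.mpr hcard
  · rw [Set.indicator_of_notMem hy]
    exact zero_le

lemma ker_sum_le_two (hthick : t.Thick) (y : V) : ∑' x, t.ker y x ≤ 2 := by
  set g : ℕ → V := fun j => t.pred^[j] y with hgdef
  have hg : Function.Injective g := fun a b h => t.iterate_inj y h
  have hsupp : Function.support (fun x => t.ker y x) ⊆ Set.range g := by
    intro x hx
    by_contra hxr
    apply hx
    apply t.ker_eq_zero
    intro j hj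
    exact hxr ⟨j, hj⟩
  calc ∑' x, t.ker y x = ∑' x, (Set.range g).indicator (fun x => t.ker y x) x := by
        rw [Set.indicator_eq_self.mpr hsupp]
    _ = ∑' x : Set.range g, t.ker y (x : V) := (tsum_subtype _ _).symm
    _ = ∑' j, t.ker y (g j) := by
        rw [← (Equiv.ofInjective g hg).tsum_eq (fun x : Set.range g => t.ker y (x : V))]
        simp
    _ ≤ ∑' j : ℕ, (2 : ℝ≥0∞)⁻¹ ^ j := ENNReal.tsum_le_tsum (t.ker_le hthick y)
    _ = 2 := by
        rw [ENNReal.tsum_geometric]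
        rw [show (1 : ℝ≥0∞) - 2⁻¹ = 2⁻¹ by
          rw [ENNReal.sub_eq_of_eq_add (by simp)]
          rw [ENNReal.inv_two_add_inv_two]]
        simp

lemma avg_le_ker (f : V → ℝ) (x : V) (R : ℕ) :
    t.setAvg (t.tri x R) f ≤ ∑' y, nn f y * t.ker y x := by
  have h1 : t.setAvg (t.tri x R) f
      = ∑' y, nn f y * (t.tri x R).indicator (fun _ => ((t.tri x R).ncard : ℝ≥0∞)⁻¹) y := by
    rw [setAvg, div_eq_mul_inv,
      show (∑' y : (t.tri x R), ((‖f (y : V)‖₊ : ℝ≥0∞)))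
          = ∑' y, (t.tri x R).indicator (fun y => ((‖f y‖₊ : ℝ≥0∞))) y from tsum_subtype (t.tri x R) (fun y => ((‖f y‖₊ : ℝ≥0∞))),
      ← ENNReal.tsum_mul_right]
    congr 1
    ext y
    by_cases hy : y ∈ t.tri x R <;> simp [hy, nn]
  rw [h1]
  apply ENNReal.tsum_le_tsum
  intro y
  apply mul_le_mul_right
  exact le_iSup (fun R => (t.tri x R).indicator (fun _ => ((t.tri x R).ncard : ℝ≥0∞)⁻¹) y) R


end TreeData

/-- The centred triangular maximal operator `𝒯` is bounded on `L^1`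
with operator norm at most `2`. -/
theorem stmt2 {V : Type*} (t : TreeData V) (hthick : t.Thick) (f : V → ℝ)
    (hf : ∑' x, TreeData.nn f x ≠ ∞) :
    ∑' x, t.cmax f x ≤ 2 * ∑' x, TreeData.nn f x := by
    calc ∑' x, t.cmax f x ≤ ∑' x, ∑' y, TreeData.nn f y * t.ker y x :=
        ENNReal.tsum_le_tsum fun x => iSup_le fun R => t.avg_le_ker f x R
    _ = ∑' y, ∑' x, TreeData.nn f y * t.ker y x := ENNReal.tsum_comm
    _ = ∑' y, TreeData.nn f y * ∑' x, t.ker y x :=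
        tsum_congr fun y => ENNReal.tsum_mul_left
    _ ≤ ∑' y, TreeData.nn f y * 2 :=
        ENNReal.tsum_le_tsum fun y => mul_le_mul_right (t.ker_sum_le_two hthick y) _
    _ = 2 * ∑' y, TreeData.nn f y := by
        rw [← ENNReal.tsum_mul_left]
        exact tsum_congr fun y => mul_comm _ _
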